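/- arXiv:1512.08696 — 6 statements merged into one kernel-verified Lean document; each statement's English description precedes it below -/
import Mathlib

section
/- The harmonic product ∗ on the ring ℚ⟨x,y⟩, restricted to the subring 𝔥¹ = ℚ + ℚ⟨x,y⟩y (spanned by 1 and words z_{k₁}⋯z_{k_d} where z_k = x^{k-1}y), defined inductively by 1∗w = w∗1 = w and z_k w₁ ∗ z_l w₂ = z_k(w₁ ∗ z_l w₂) + z_l(z_k w₁ ∗ w₂) + z_{k+l}(w₁ ∗ w₂), is commutative. -/
/- The harmonic product on 𝔥¹ = ℚ + ℚ⟨x,y⟩y, identified with the free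
noncommutative algebra on the generators z_k (k ≥ 1), i.e. the monoid algebra
of the free monoid on ℕ+, is commutative. -/

noncomputable section

/-- 𝔥¹, the monoid algebra ℚ⟨z₁, z₂, …⟩ on the free monoid on ℕ+. -/
abbrev Hone : Type := MonoidAlgebra ℚ (FreeMonoid ℕ+)

/-- The harmonic product of two words, defined inductively. -/
def hword : List ℕ+ → List ℕ+ → Hone
  | [], L => MonoidAlgebra.single (FreeMonoid.ofList L) 1
  | K, [] => MonoidAlgebra.single (FreeMonoid.ofList K) 1
  | k :: K, l :: L =>
      MonoidAlgebra.single (FreeMonoid.of k) 1 * hword K (l :: L)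
      + MonoidAlgebra.single (FreeMonoid.of l) 1 * hword (k :: K) L
      + MonoidAlgebra.single (FreeMonoid.of (k + l)) 1 * hword K L
termination_by K L => K.length + L.length

lemma hword_comm (K L : List ℕ+) : hword K L = hword L K := by
  have H : ∀ n (K L : List ℕ+), K.length + L.length = n → hword K L = hword L K := by
    intro n
    induction n using Nat.strong_induction_on with
    | _ n ih =>
      intro K L hn
      match K, L with
      | [], [] => rfl
      | [], l :: L => rw [hword, hword] <;> simp
      | k :: K, [] => rw [hword, hword] <;> simp
      | k :: K, l :: L =>
        rw [hword, hword]
        rw [ih (K.length + (l :: L).length) (by simp at hn ⊢; omega) K (l :: L) rfl,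
          ih ((k :: K).length + L.length) (by simp at hn ⊢; omega) (k :: K) L rfl,
          ih (K.length + L.length) (by simp at hn ⊢; omega) K L rfl, add_comm k l]
        abel
  exact H _ K L rfl

/-- The harmonic product, extended ℚ-bilinearly to all of 𝔥¹. -/
def hstar (a b : Hone) : Hone :=
  a.coeff.sum fun w c => b.coeff.sum fun w' c' => (c * c') • hword (FreeMonoid.toList w) (FreeMonoid.toList w')

/-- The harmonic product is commutative. -/
theorem harmonic_comm (a b : Hone) : hstar a b = hstar b a := by
  rw [hstar, hstar, Finsupp.sum_comm]
  refine Finsupp.sum_congr fun w' _ => Finsupp.sum_congr fun w _ => ?_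
  rw [hword_comm, mul_comm]

end
end

section
/- The harmonic product ∗ on 𝔥¹ = ℚ + ℚ⟨x,y⟩y is associative. -/
/- The harmonic product on 𝔥¹ = ℚ + ℚ⟨x,y⟩y, identified with the free
noncommutative algebra on the generators z_k (k ≥ 1), i.e. the monoid algebra
of the free monoid on ℕ+, is commutative. -/

noncomputable section

def wd (K : List ℕ+) : Hone := MonoidAlgebra.single (FreeMonoid.ofList K) 1
def za (k : ℕ+) : Hone := MonoidAlgebra.single (FreeMonoid.of k) 1

lemma hword_nil_left (L : List ℕ+) : hword [] L = wd L := by rw [hword]; rfl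

lemma hword_nil_right (K : List ℕ+) : hword K [] = wd K := by
  cases K with
  | nil => rw [hword]; rfl
  | cons k K => rw [hword] <;> simp [wd]

lemma hword_cons (k l : ℕ+) (K L : List ℕ+) :
    hword (k :: K) (l :: L) = za k * hword K (l :: L) + za l * hword (k :: K) L
      + za (k + l) * hword K L := by
  rw [hword]; rfl

lemma hstar_zero_left (b : Hone) : hstar 0 b = 0 := by simp [hstar]

lemma hstar_zero_right (a : Hone) : hstar a 0 = 0 := by simp [hstar]

lemma hstar_add_left (a a' b : Hone) : hstar (a + a') b = hstar a b + hstar a' b := by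
  unfold hstar
  rw [MonoidAlgebra.coeff_add, Finsupp.sum_add_index'] <;> intros <;> simp [add_mul, add_smul, Finsupp.sum_add]

lemma hstar_add_right (a b b' : Hone) : hstar a (b + b') = hstar a b + hstar a b' := by
  unfold hstar
  rw [← Finsupp.sum_add]
  congr 1; ext w c
  rw [MonoidAlgebra.coeff_add, Finsupp.sum_add_index'] <;> intros <;> simp [mul_add, add_smul]

lemma hstar_single_single (w w' : FreeMonoid ℕ+) (c c' : ℚ) :
    hstar (MonoidAlgebra.single w c) (MonoidAlgebra.single w' c')
      = (c * c') • hword (FreeMonoid.toList w) (FreeMonoid.toList w') := by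
  unfold hstar
  rw [MonoidAlgebra.coeff_single, MonoidAlgebra.coeff_single, Finsupp.sum_single_index, Finsupp.sum_single_index] <;> simp [Finsupp.sum_single_index]

lemma hstar_smul_left (r : ℚ) (a b : Hone) : hstar (r • a) b = r • hstar a b := by
  unfold hstar
  rw [MonoidAlgebra.coeff_smul, Finsupp.sum_smul_index (fun w => by simp), Finsupp.smul_sum]
  refine Finsupp.sum_congr fun w _ => ?_
  rw [Finsupp.smul_sum]
  refine Finsupp.sum_congr fun w' _ => ?_
  rw [smul_smul, mul_assoc]

lemma hstar_smul_right (r : ℚ) (a b : Hone) : hstar a (r • b) = r • hstar a b := by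
  unfold hstar
  rw [Finsupp.smul_sum]
  refine Finsupp.sum_congr fun w _ => ?_
  rw [MonoidAlgebra.coeff_smul, Finsupp.sum_smul_index (fun w' => by simp), Finsupp.smul_sum]
  refine Finsupp.sum_congr fun w' _ => ?_
  rw [smul_smul]
  congr 1
  ring

lemma Hone.induction_linear {p : Hone → Prop} (a : Hone) (h0 : p 0)
    (hadd : ∀ f g : Hone, p f → p g → p (f + g))
    (hsingle : ∀ (w : FreeMonoid ℕ+) (c : ℚ), p (MonoidAlgebra.single w c)) : p a :=
  MonoidAlgebra.induction_linear a h0 hadd hsingle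

lemma hstar_wd_nil_left (a : Hone) : hstar (wd []) a = a := by
  unfold hstar wd
  rw [MonoidAlgebra.coeff_single, Finsupp.sum_single_index]
  · conv_rhs => rw [← MonoidAlgebra.sum_coeff_single a]
    congr 1; ext w' c'
    simp [hword_nil_left, wd, Finsupp.smul_single]
  · simp

lemma hstar_wd_nil_right (a : Hone) : hstar a (wd []) = a := by
  unfold hstar wd
  conv_rhs => rw [← MonoidAlgebra.sum_coeff_single a]
  congr 1; ext w c
  rw [MonoidAlgebra.coeff_single, Finsupp.sum_single_index]
  · simp [hword_nil_right, wd, Finsupp.smul_single]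
  · simp

lemma hstar_wd_wd (K L : List ℕ+) : hstar (wd K) (wd L) = hword K L := by
  simp [wd, hstar_single_single]

lemma wd_cons (k : ℕ+) (K : List ℕ+) : wd (k :: K) = za k * wd K := by
  simp [wd, za, MonoidAlgebra.single_mul_single]

lemma single_wd (w : FreeMonoid ℕ+) (c : ℚ) :
    MonoidAlgebra.single w c = c • wd (FreeMonoid.toList w) := by
  simp [wd, Finsupp.smul_single]

lemma hstar_cons (k l : ℕ+) (a b : Hone) :
    hstar (za k * a) (za l * b)
      = za k * hstar a (za l * b) + za l * hstar (za k * a) b + za (k + l) * hstar a b := by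
  induction a using Hone.induction_linear generalizing b with
  | h0 => simp [hstar_zero_left, hstar_zero_right]
  | hadd f g hf hg => simp only [mul_add, hstar_add_left, hf, hg]; all_goals abel
  | hsingle w c =>
    induction b using Hone.induction_linear with
    | h0 => simp [hstar_zero_left, hstar_zero_right]
    | hadd f g hf hg => simp only [mul_add, hstar_add_right, hf, hg]; all_goals abel
    | hsingle w' c' =>
      have h1 : za k * MonoidAlgebra.single w c = MonoidAlgebra.single (FreeMonoid.of k * w) c := by
        simp [za, MonoidAlgebra.single_mul_single]
      have h2 : za l * MonoidAlgebra.single w' c' = MonoidAlgebra.single (FreeMonoid.of l * w') c' := by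
        simp [za, MonoidAlgebra.single_mul_single]
      rw [h1, h2]
      simp only [hstar_single_single, FreeMonoid.toList_of_mul]
      rw [hword_cons]
      simp only [mul_smul_comm, smul_add]

lemma expandL (k l m : ℕ+) (X Y Z : Hone) :
    hstar (hstar (za k * X) (za l * Y)) (za m * Z)
      = za k * hstar (hstar X (za l * Y)) (za m * Z)
      + za l * hstar (hstar (za k * X) Y) (za m * Z)
      + za m * hstar (hstar (za k * X) (za l * Y)) Z
      + za (k + l) * hstar (hstar X Y) (za m * Z)
      + za (k + m) * hstar (hstar X (za l * Y)) Z
      + za (l + m) * hstar (hstar (za k * X) Y) Z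
      + za (k + l + m) * hstar (hstar X Y) Z := by
  simp only [hstar_cons, hstar_add_left, mul_add]
  abel

lemma expandR (k l m : ℕ+) (X Y Z : Hone) :
    hstar (za k * X) (hstar (za l * Y) (za m * Z))
      = za k * hstar X (hstar (za l * Y) (za m * Z))
      + za l * hstar (za k * X) (hstar Y (za m * Z))
      + za m * hstar (za k * X) (hstar (za l * Y) Z)
      + za (k + l) * hstar X (hstar Y (za m * Z))
      + za (k + m) * hstar X (hstar (za l * Y) Z)
      + za (l + m) * hstar (za k * X) (hstar Y Z)
      + za (k + l + m) * hstar X (hstar Y Z) := by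
  simp only [hstar_cons, hstar_add_right, mul_add, ← add_assoc]
  abel

lemma key : ∀ (K L M : List ℕ+),
    hstar (hstar (wd K) (wd L)) (wd M) = hstar (wd K) (hstar (wd L) (wd M))
  | [], L, M => by rw [hstar_wd_nil_left, hstar_wd_nil_left]
  | k :: K, [], M => by rw [hstar_wd_nil_right, hstar_wd_nil_left]
  | k :: K, l :: L, [] => by rw [hstar_wd_nil_right, hstar_wd_nil_right]
  | k :: K, l :: L, m :: M => by
    rw [wd_cons k K, wd_cons l L, wd_cons m M, expandL, expandR]
    simp only [← wd_cons]
    rw [key K (l :: L) (m :: M), key (k :: K) L (m :: M), key (k :: K) (l :: L) M,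
      key K L (m :: M), key K (l :: L) M, key (k :: K) L M, key K L M]
termination_by K L M => K.length + L.length + M.length

/-- The harmonic product is associative. -/
theorem harmonic_assoc (a b c : Hone) : hstar (hstar a b) c = hstar a (hstar b c) := by
  induction a using Hone.induction_linear with
  | h0 => simp [hstar_zero_left]
  | hadd f g hf hg => simp only [hstar_add_left, hf, hg]
  | hsingle w ca =>
    induction b using Hone.induction_linear with
    | h0 => simp [hstar_zero_left, hstar_zero_right]
    | hadd f g hf hg => simp only [hstar_add_left, hstar_add_right, hf, hg]
    | hsingle w' cb =>
      induction c using Hone.induction_linear with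
      | h0 => simp [hstar_zero_right]
      | hadd f g hf hg => simp only [hstar_add_right, hf, hg]
      | hsingle w'' cc =>
        rw [single_wd w, single_wd w', single_wd w'']
        simp only [hstar_smul_left, hstar_smul_right]
        rw [key]

end
end

section
/- The automorphism φ of ℚ⟨x,y⟩ with φ(x) = x+y and φ(y) = −y maps the subring 𝔥¹ = ℚ + ℚ⟨x,y⟩y into itself. -/
noncomputable section

/-- 𝔥 = ℚ⟨x,y⟩, the free noncommutative polynomial algebra on two generators. -/
abbrev H : Type := FreeAlgebra ℚ (Fin 2)

/-- The generator x. -/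
def Xg : H := FreeAlgebra.ι ℚ (0 : Fin 2)

/-- The generator y. -/
def Yg : H := FreeAlgebra.ι ℚ (1 : Fin 2)

/-- z = x + y. -/
def Zg : H := Xg + Yg

/-- Membership in 𝔥¹ = ℚ + 𝔥y. -/
def MemH1 (a : H) : Prop := ∃ (q : ℚ) (h : H), a = algebraMap ℚ H q + h * Yg

/-- The automorphism φ of ℚ⟨x,y⟩ with φ(x) = x + y and φ(y) = -y. -/
def phi : H →ₐ[ℚ] H := FreeAlgebra.lift ℚ (fun i : Fin 2 => if i = 0 then Xg + Yg else -Yg)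

/-- φ maps 𝔥¹ = ℚ + 𝔥y into itself. -/
theorem phi_maps_H1_to_H1 (a : H) (ha : MemH1 a) : MemH1 (phi a) := by
  obtain ⟨q, h, rfl⟩ := ha
  refine ⟨q, -(phi h), ?_⟩
  have hy : phi Yg = -Yg := by
    simp [phi, Yg, FreeAlgebra.lift_ι_apply]
  simp [map_add, map_mul, AlgHom.commutes, hy, mul_neg, neg_mul]

end
end

section
/- In ℚ⟨x,y⟩ with z = x+y, for any word w and positive integers m₁,…,m_s, l, one has ∂_l(z^{m₁-1}y⋯z^{m_s-1}y·w) = −∑_{i=1}^{s} z^{m₁-1}y⋯z^{m_{i-1}-1}y·z^{m_i-1}x z^{l-1}y·z^{m_{i+1}-1}y⋯z^{m_s-1}y·w + z^{m₁-1}y⋯z^{m_s-1}y·∂_l(w). -/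
noncomputable section

/-- The product z^{m₁-1}y ⋯ z^{m_s-1}y associated to a tuple (m₁,…,m_s) of
positive integers. -/
def zy (ms : List ℕ+) : H := (ms.map fun m => Zg ^ ((m : ℕ) - 1) * Yg).prod

/-- Leibniz formula for ∂_l applied to z^{m₁-1}y⋯z^{m_s-1}y·w. -/
theorem derivation_zy_mul (l : ℕ+) (D : H →ₗ[ℚ] H)
    (hD : ∀ a b : H, D (a * b) = D a * b + a * D b)
    (hx : D Xg = Xg * Zg ^ ((l : ℕ) - 1) * Yg)
    (hy : D Yg = -(Xg * Zg ^ ((l : ℕ) - 1) * Yg))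
    (ms : List ℕ+) (w : H) :
    D (zy ms * w)
      = -(∑ i : Fin ms.length,
            zy (ms.take (i : ℕ))
              * (Zg ^ ((ms.get i : ℕ) - 1) * Xg * Zg ^ ((l : ℕ) - 1) * Yg)
              * zy (ms.drop ((i : ℕ) + 1)) * w)
        + zy ms * D w := by
  have hD1 : D 1 = 0 := by
    have h2 := hD 1 1
    simp only [one_mul, mul_one] at h2
    exact (right_eq_add.mp h2)
  have hz : D Zg = 0 := by
    rw [Zg, map_add, hx, hy]; simp
  have hzpow : ∀ k : ℕ, D (Zg ^ k) = 0 := by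
    intro k
    induction k with
    | zero => simpa using hD1
    | succ n ih => rw [pow_succ, hD, ih, hz]; simp
  have hhead : ∀ m : ℕ+, D (Zg ^ ((m : ℕ) - 1) * Yg)
      = -(Zg ^ ((m : ℕ) - 1) * Xg * Zg ^ ((l : ℕ) - 1) * Yg) := by
    intro m
    rw [hD, hzpow, hy]; simp [mul_assoc]
  induction ms with
  | nil => simp [zy]
  | cons m ms ih =>
    have hzy : zy (m :: ms) = Zg ^ ((m : ℕ) - 1) * Yg * zy ms := by
      simp [zy]
    have hcons : ∀ (a : ℕ+) (t : List ℕ+), zy (a :: t) = Zg ^ ((a : ℕ) - 1) * Yg * zy t := by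
      intro a t; simp [zy]
    rw [hzy, mul_assoc, hD, ih, hhead]
    have hnil : zy [] = 1 := by simp [zy]
    simp only [List.length_cons, Fin.sum_univ_succ, Fin.val_zero, List.take_zero,
      List.get_cons_zero, List.drop_succ_cons, Fin.val_succ, List.get_cons_succ,
      List.take_succ_cons, List.drop_zero, hcons, hnil]
    simp only [one_mul, neg_add, mul_add, mul_neg, neg_mul, Finset.mul_sum, mul_assoc,
      add_assoc, List.get_cons_succ']


end
end

section
/- For any prime p and positive integers k₁,…,k_d, one has ζ_p(k₁,…,k_d) ≡ (−1)^{k₁+⋯+k_d} ζ_p(k_d,…,k₁) (mod p), where ζ_p(k₁,…,k_d) = ∑_{p>n₁>⋯>n_d≥1} n₁^{-k₁}⋯n_d^{-k_d} computed in ℤ/pℤ. -/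
/-- The truncated multiple zeta sum ∑_{N>n₁>⋯>n_d≥1} n₁^{-k₁}⋯n_d^{-k_d} in
ℤ/pℤ, defined by recursion on the index list (outer variable bounded by N). -/
def zetaTrunc (p : ℕ) : List ℕ → ℕ → ZMod p
  | [], _ => 1
  | k :: ks, N => ∑ n ∈ Finset.Ico 1 N, ((n : ZMod p)⁻¹) ^ k * zetaTrunc p ks n

/-- Mixed truncated sum over chains `N > n₁ > ⋯ > n_d > m`. -/
def mixZ (p : ℕ) : List ℕ → ℕ → ℕ → ZMod p
  | [], _, _ => 1
  | k :: ks, m, N => ∑ n ∈ Finset.Ioo m N, ((n : ZMod p)⁻¹) ^ k * mixZ p ks m n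

/-- Sum over chains `p > n₁ > ⋯ > n_d > m`, indexed from the inside
(head of the list is the weight of the innermost variable). -/
def wZ (p : ℕ) : List ℕ → ℕ → ZMod p
  | [], _ => 1
  | k :: ks, m => ∑ n ∈ Finset.Ioo m p, ((n : ZMod p)⁻¹) ^ k * wZ p ks n

lemma mixZ_zero (p : ℕ) (ks : List ℕ) (N : ℕ) : mixZ p ks 0 N = zetaTrunc p ks N := by
  induction ks generalizing N with
  | nil => rfl
  | cons k t ih =>
    rw [mixZ, zetaTrunc, ← Finset.Ico_add_one_left_eq_Ioo]
    exact Finset.sum_congr rfl fun n _ => by rw [ih]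

lemma sum_swap_Ioo (p m N : ℕ) (f : ℕ → ℕ → ZMod p) :
    ∑ j ∈ Finset.Ioo m N, ∑ n ∈ Finset.Ioo m j, f n j
      = ∑ n ∈ Finset.Ioo m N, ∑ j ∈ Finset.Ioo n N, f n j := by
  exact Finset.sum_comm' fun j n => by
    simp only [Finset.mem_Ioo]; omega

lemma mixZ_snoc (p : ℕ) (ks : List ℕ) (k m N : ℕ) :
    mixZ p (ks ++ [k]) m N
      = ∑ n ∈ Finset.Ioo m N, ((n : ZMod p)⁻¹) ^ k * mixZ p ks n N := by
  induction ks generalizing N with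
  | nil => simp [mixZ]
  | cons k' t ih =>
    rw [List.cons_append, mixZ]
    simp_rw [ih, Finset.mul_sum]
    rw [sum_swap_Ioo]
    simp only [mixZ]
    simp_rw [Finset.mul_sum]
    exact Finset.sum_congr rfl fun n _ => Finset.sum_congr rfl fun j _ => by ring

lemma wZ_eq_mixZ (p : ℕ) (ks : List ℕ) (m : ℕ) :
    wZ p ks m = mixZ p ks.reverse m p := by
  induction ks generalizing m with
  | nil => rfl
  | cons k t ih =>
    rw [wZ, List.reverse_cons, mixZ_snoc]
    exact Finset.sum_congr rfl fun n _ => by rw [ih]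

lemma wZ_sub (p : ℕ) [Fact p.Prime] (ks : List ℕ) :
    ∀ n ≤ p, wZ p ks (p - n) = (-1 : ZMod p) ^ ks.sum * zetaTrunc p ks n := by
  induction ks with
  | nil => intro n _; simp [wZ, zetaTrunc]
  | cons k t ih =>
    intro n hn
    rw [wZ, zetaTrunc, Finset.mul_sum]
    refine Finset.sum_nbij' (fun j => p - j) (fun j => p - j) ?_ ?_ ?_ ?_ ?_
    · intro a ha; simp only [Finset.mem_Ioo, Finset.mem_Ico] at ha; try dsimp only
      try simp only [Finset.mem_Ioo, Finset.mem_Ico]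
      omega
    · intro a ha; simp only [Finset.mem_Ioo, Finset.mem_Ico] at ha; try dsimp only
      try simp only [Finset.mem_Ioo, Finset.mem_Ico]
      omega
    · intro a ha; simp only [Finset.mem_Ioo, Finset.mem_Ico] at ha; try dsimp only
      try simp only [Finset.mem_Ioo, Finset.mem_Ico]
      omega
    · intro a ha; simp only [Finset.mem_Ioo, Finset.mem_Ico] at ha; try dsimp only
      try simp only [Finset.mem_Ioo, Finset.mem_Ico]
      omega
    · intro a ha
      simp only [Finset.mem_Ioo] at ha
      have hap : a ≤ p := ha.2.le
      have hcast : ((p - a : ℕ) : ZMod p) = -(a : ZMod p) := by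
        rw [Nat.cast_sub hap]; simp
      have hinv : (a : ZMod p)⁻¹ = -(((p - a : ℕ) : ZMod p))⁻¹ := by
        rw [hcast, inv_neg, neg_neg]
      have hw : wZ p t a = (-1 : ZMod p) ^ t.sum * zetaTrunc p t (p - a) := by
        have := ih (p - a) (Nat.sub_le _ _)
        rwa [Nat.sub_sub_self hap] at this
      rw [hw, hinv, neg_pow, List.sum_cons, pow_add]
      ring

/-- ζ_p(k₁,…,k_d) = (−1)^{k₁+⋯+k_d} ζ_p(k_d,…,k₁) in ℤ/pℤ. -/
theorem zetaTrunc_reverse (p : ℕ) (hp : p.Prime) (ks : List ℕ)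
    (hks : ∀ k ∈ ks, 1 ≤ k) :
    zetaTrunc p ks p = (-1 : ZMod p) ^ ks.sum * zetaTrunc p ks.reverse p := by
  haveI := Fact.mk hp
  have h1 : zetaTrunc p ks p = wZ p ks.reverse 0 := by
    rw [wZ_eq_mixZ, List.reverse_reverse, mixZ_zero]
  have h2 := wZ_sub p ks.reverse p le_rfl
  rw [Nat.sub_self] at h2
  rw [h1, h2, List.sum_reverse]
end

section
/- Hoffman's formula: in (𝔥¹, ∗), for l ≥ 1 and any word z_{k₁}⋯z_{k_d}, one has z_l ∗ z_{k₁}⋯z_{k_d} = ∑_{i=0}^{d} z_{k₁}⋯z_{k_i} z_l z_{k_{i+1}}⋯z_{k_d} + ∑_{i=1}^{d} z_{k₁}⋯z_{k_{i-1}} z_{k_i+l} z_{k_{i+1}}⋯z_{k_d}. -/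
/- The harmonic product on 𝔥¹ = ℚ + ℚ⟨x,y⟩y, identified with the free
noncommutative algebra on the generators z_k (k ≥ 1), i.e. the monoid algebra
of the free monoid on ℕ+, is commutative. -/

noncomputable section

lemma single_mul_cons (k : ℕ+) (w : List ℕ+) :
    MonoidAlgebra.single (FreeMonoid.of k) (1 : ℚ) *
      MonoidAlgebra.single (FreeMonoid.ofList w) (1 : ℚ)
      = MonoidAlgebra.single (FreeMonoid.ofList (k :: w)) 1 := by
  rw [MonoidAlgebra.single_mul_single, one_mul]
  rfl

lemma hword_singleton (l : ℕ+) (K : List ℕ+) :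
    hword [l] K
      = (∑ i ∈ Finset.range (K.length + 1),
          MonoidAlgebra.single (FreeMonoid.ofList (K.take i ++ [l] ++ K.drop i)) (1 : ℚ))
      + ∑ i : Fin K.length,
          MonoidAlgebra.single
            (FreeMonoid.ofList (K.take (i : ℕ) ++ [K.get i + l] ++ K.drop ((i : ℕ) + 1))) (1 : ℚ) := by
  induction K with
  | nil => simp [hword]
  | cons k K ih =>
    have h : hword [l] (k :: K)
        = MonoidAlgebra.single (FreeMonoid.of l) 1 * hword [] (k :: K)
        + MonoidAlgebra.single (FreeMonoid.of k) 1 * hword [l] K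
        + MonoidAlgebra.single (FreeMonoid.of (l + k)) 1 * hword [] K := by
      conv_lhs => rw [hword]
    rw [h, ih]
    simp only [hword]
    rw [mul_add, Finset.mul_sum, Finset.mul_sum]
    simp only [single_mul_cons, List.length_cons]
    conv_rhs => rw [Finset.sum_range_succ', Fin.sum_univ_succ]
    simp only [List.take_succ_cons, List.drop_succ_cons, List.take_zero,
      List.drop_zero, List.nil_append, List.cons_append, List.get_cons_succ,
      List.get_cons_succ', List.get_cons_zero, Fin.val_succ, Fin.val_zero,
      List.take_nil, List.drop_nil]
    rw [add_comm l k]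
    abel

/-- Hoffman's formula for the harmonic product z_l ∗ z_{k₁}⋯z_{k_d}. -/
theorem hoffman_formula (l : ℕ+) (K : List ℕ+) :
    hstar (MonoidAlgebra.single (FreeMonoid.of l) 1)
        (MonoidAlgebra.single (FreeMonoid.ofList K) 1)
      = (∑ i ∈ Finset.range (K.length + 1),
          MonoidAlgebra.single (FreeMonoid.ofList (K.take i ++ [l] ++ K.drop i)) (1 : ℚ))
      + ∑ i : Fin K.length,
          MonoidAlgebra.single
            (FreeMonoid.ofList (K.take (i : ℕ) ++ [K.get i + l] ++ K.drop ((i : ℕ) + 1))) (1 : ℚ) := by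
  rw [← hword_singleton l K]
  unfold hstar
  rw [MonoidAlgebra.sum_single_index, MonoidAlgebra.coeff_single, Finsupp.sum_single_index] <;>
    simp
end
end
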